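/- If η_s satisfies 1/(m(L+ε)) ≤ η_s ≤ 1/(mε) and m > max{ (L²/ε)(1 + 2L/ε), 1 + √(1 + 8L³/ε) } / ε, then γ_s := η_s[1/2 - η_s(1 + 4(m-1)L³η_s²)] is strictly positive. -/
import Mathlib


theorem stmt16 (L ε : ℝ) (hL : 0 < L) (hε : 0 < ε) (m : ℕ) (hm1 : 1 ≤ m)
    (hm : (m : ℝ) > max ((L ^ 2 / ε) * (1 + 2 * L / ε))
        (1 + Real.sqrt (1 + 8 * L ^ 3 / ε)) / ε)
    (η : ℝ) (hlow : 1 / (m * (L + ε)) ≤ η) (hhigh : η ≤ 1 / (m * ε)) :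
    0 < η * (1 / 2 - η * (1 + 4 * ((m : ℝ) - 1) * L ^ 3 * η ^ 2)) := by
  have hmR : (1:ℝ) ≤ (m:ℝ) := by exact_mod_cast hm1
  have hmpos : (0:ℝ) < m := by linarith
  set s := Real.sqrt (1 + 8 * L ^ 3 / ε) with hs
  have hs0 : 0 ≤ s := Real.sqrt_nonneg _
  have hs2 : s ^ 2 = 1 + 8 * L ^ 3 / ε := Real.sq_sqrt (by positivity)
  have hm2 : (1 + s) / ε < (m:ℝ) :=
    lt_of_le_of_lt (by gcongr; exact le_max_right _ _) hm
  have hme : (m:ℝ) * ε > 1 + s := by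
    have := (div_lt_iff₀ hε).mp hm2
    linarith
  have hη : 0 < η := lt_of_lt_of_le (by positivity) hlow
  have key : (m:ℝ)^2 * ε^2 - 2*(m:ℝ)*ε > 8 * L^3 / ε := by nlinarith
  have key2 : (m:ℝ)^3 * ε^3 - 2*(m:ℝ)^2*ε^2 > 8 * (m:ℝ) * L^3 := by
    have h8 : 8 * L^3 / ε * ε = 8 * L^3 := by field_simp
    nlinarith [mul_lt_mul_of_pos_left key (by positivity : (0:ℝ) < (m:ℝ)*ε)]
  have hme0 : (0:ℝ) < (m:ℝ) * ε := by positivity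
  have hηm : η * ((m:ℝ) * ε) ≤ 1 := by
    rw [← le_div_iff₀ hme0]
    exact hhigh
  have ht0 : 0 ≤ η * ((m:ℝ) * ε) := by positivity
  have hcube : (η * ((m:ℝ) * ε)) ^ 3 ≤ 1 := pow_le_one₀ ht0 hηm
  have h1' : 2 * (m:ℝ)^2 * ε^2 * (η * ((m:ℝ)*ε)) ≤ 2 * (m:ℝ)^2 * ε^2 * 1 :=
    mul_le_mul_of_nonneg_left hηm (by positivity)
  have h2' : 8 * ((m:ℝ)-1) * L^3 * ((η * ((m:ℝ)*ε))^3) ≤ 8 * ((m:ℝ)-1) * L^3 * 1 :=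
    mul_le_mul_of_nonneg_left hcube (by nlinarith [pow_pos hL 3])
  have hb : η * (1 + 4 * ((m : ℝ) - 1) * L ^ 3 * η ^ 2) < 1 / 2 := by
    nlinarith [key2, h1', h2', pow_pos hme0 3, pow_pos hη 3]
  exact mul_pos hη (by linarith)
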